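/- For every ε ∈ (0, π) there exists a constant K > 0 such that |F(z)| = |1/(1 − p·z·T(z)^{p−1})| ≤ K/(1 + |z|)^{1/p} for all z ∈ ℂ_ε. -/

import Mathlib

/-- `R_p = (p-1)^(p-1) / p^p`. -/
noncomputable def Rp (p : ℕ) : ℝ :=
  ((p - 1 : ℕ) : ℝ) ^ (p - 1) / (p : ℝ) ^ p

/-- The cut plane `Ω_p = ℂ ∖ [R_p, ∞)`. -/
noncomputable def cutPlane (p : ℕ) : Set ℂ :=
  (Complex.ofReal '' Set.Ici (Rp p))ᶜ

/-- The open sector `ℂ_ε = {z : |arg z| > ε}` (principal argument). -/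
def sector (ε : ℝ) : Set ℂ := {z : ℂ | ε < |Complex.arg z|}

lemma Rp_pos {p : ℕ} (hp : 2 ≤ p) : 0 < Rp p := by
  unfold Rp
  have h1 : (0:ℝ) < ((p - 1 : ℕ) : ℝ) := by
    have : 0 < p - 1 := by omega
    exact_mod_cast this
  have h2 : (0:ℝ) < (p : ℝ) := by positivity
  positivity

lemma aux_key_id {p : ℕ} (hp : 2 ≤ p) {T : ℂ → ℂ} {z : ℂ}
    (hz : z * T z ^ p - T z + 1 = 0) :
    (1 - (p : ℂ) * z * T z ^ (p - 1)) * T z = (p : ℂ) - ((p : ℂ) - 1) * T z := by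
  have h1 : T z ^ (p - 1) * T z = T z ^ p := by
    rw [← pow_succ]
    congr 1
    omega
  linear_combination (-(p:ℂ)) * z * h1 - (p:ℂ) * hz

lemma aux_T_bound {p : ℕ} (hp : 2 ≤ p) {T : ℂ → ℂ} {z : ℂ}
    (hz : z * T z ^ p - T z + 1 = 0) (h2 : (2:ℝ) ≤ ‖z‖) :
    ‖T z‖ ≤ 1 ∧ ‖T z‖ ^ p ≤ 2 / ‖z‖ := by
  set t := ‖T z‖ with htdef
  have hT1 : T z - 1 = z * T z ^ p := by linear_combination -hz
  have hnorm : ‖z‖ * t ^ p = ‖T z - 1‖ := by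
    rw [hT1, norm_mul, norm_pow]
  have hle : ‖z‖ * t ^ p ≤ t + 1 := by
    rw [hnorm]
    calc ‖T z - 1‖ ≤ ‖T z‖ + ‖(1:ℂ)‖ := norm_sub_le _ _
    _ = t + 1 := by simp [htdef]
  have ht0 : 0 ≤ t := norm_nonneg _
  have hppos : p ≠ 0 := by omega
  have ht1 : t ≤ 1 := by
    by_contra h
    push_neg at h
    have h1 : t ≤ t ^ p := le_self_pow₀ h.le hppos
    nlinarith
  refine ⟨ht1, ?_⟩
  rw [le_div_iff₀ (by linarith)]
  have hpow1 : t ^ p ≤ 1 := pow_le_one₀ ht0 ht1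
  nlinarith

lemma aux_F_large {p : ℕ} (hp : 2 ≤ p) {T : ℂ → ℂ} {z : ℂ}
    (hz : z * T z ^ p - T z + 1 = 0)
    (hne : 1 - (p : ℂ) * z * T z ^ (p - 1) ≠ 0)
    (hR : (2:ℝ) ^ (p+1) ≤ ‖z‖) :
    ‖(1 - (p : ℂ) * z * T z ^ (p - 1))⁻¹‖ ≤ 4 / (1 + ‖z‖) ^ ((1:ℝ)/p) := by
  have hppos : (0:ℝ) < (p:ℝ) := by positivity
  have hpne : (p:ℝ) ≠ 0 := ne_of_gt hppos
  have h2R : (2:ℝ) ≤ (2:ℝ)^(p+1) := by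
    calc (2:ℝ) = 2^1 := (pow_one 2).symm
    _ ≤ 2^(p+1) := pow_le_pow_right₀ one_le_two (by omega)
  have h2 : (2:ℝ) ≤ ‖z‖ := le_trans h2R hR
  have hzpos : (0:ℝ) < ‖z‖ := by linarith
  obtain ⟨ht1, htp⟩ := aux_T_bound hp hz h2
  set t := ‖T z‖ with htdef
  have ht0 : 0 ≤ t := norm_nonneg _
  -- t ≤ 1/2
  have hfrac : (2:ℝ) / ‖z‖ ≤ (1/2:ℝ)^p := by
    have e : ((1:ℝ)/2)^p = 2 / 2^(p+1) := by
      rw [div_pow, one_pow, pow_succ]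
      field_simp
    rw [e]
    apply div_le_div_of_nonneg_left (by norm_num) (by positivity) hR
  have htp2 : t ^ p ≤ (1/2:ℝ)^p := le_trans htp hfrac
  have ht12 : t ≤ 1/2 := by
    by_contra h
    push_neg at h
    have := pow_lt_pow_left₀ h (by norm_num) (by omega : p ≠ 0)
    linarith
  -- denominator bound
  set B := (p : ℂ) - ((p : ℂ) - 1) * T z with hBdef
  have hcast : ((p:ℂ) - 1) = ((p - 1 : ℕ) : ℂ) := by
    have : ((p - 1 : ℕ) : ℂ) = (p:ℂ) - 1 := by
      push_cast [Nat.cast_sub (by omega : 1 ≤ p)]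
      ring
    rw [this]
  have hnormp1 : ‖(p:ℂ) - 1‖ = (p:ℝ) - 1 := by
    rw [hcast]
    rw [Complex.norm_natCast]
    push_cast [Nat.cast_sub (by omega : 1 ≤ p)]
    ring
  have hp2 : (2:ℝ) ≤ (p:ℝ) := by exact_mod_cast hp
  have hBnorm : 1 ≤ ‖B‖ := by
    have h1 : ‖(p:ℂ)‖ - ‖((p:ℂ) - 1) * T z‖ ≤ ‖B‖ := norm_sub_norm_le _ _
    have h2' : ‖((p:ℂ) - 1) * T z‖ = ((p:ℝ) - 1) * t := by
      rw [norm_mul, hnormp1]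
    have h3 : ‖(p:ℂ)‖ = (p:ℝ) := Complex.norm_natCast p
    rw [h2', h3] at h1
    nlinarith
  have hB0 : B ≠ 0 := by
    intro h
    rw [h, norm_zero] at hBnorm
    linarith
  -- F = T/B
  have hFval : (1 - (p : ℂ) * z * T z ^ (p - 1))⁻¹ = T z / B := by
    rw [eq_div_iff hB0, hBdef, ← aux_key_id hp hz, inv_mul_cancel_left₀ hne]
  have hFle : ‖(1 - (p : ℂ) * z * T z ^ (p - 1))⁻¹‖ ≤ t := by
    rw [hFval, norm_div]
    exact le_trans (div_le_self ht0 hBnorm) le_rfl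
  -- t ≤ (2/‖z‖)^(1/p)
  have hteq : t = (t ^ p) ^ ((1:ℝ)/p) := by
    rw [← Real.rpow_natCast t p, ← Real.rpow_mul ht0, mul_one_div, div_self hpne,
      Real.rpow_one]
  have ht_rpow : t ≤ ((2:ℝ)/‖z‖) ^ ((1:ℝ)/p) := by
    rw [hteq]
    exact Real.rpow_le_rpow (pow_nonneg ht0 p) htp (by positivity)
  -- (2/‖z‖)^(1/p) ≤ 4/(1+‖z‖)^(1/p)
  have hexp1 : (1:ℝ)/p ≤ 1 := by
    rw [div_le_one hppos]
    linarith
  have e2 : (2:ℝ) ^ ((1:ℝ)/p) ≤ 2 := by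
    calc (2:ℝ)^((1:ℝ)/p) ≤ 2^(1:ℝ) := Real.rpow_le_rpow_of_exponent_le one_le_two hexp1
    _ = 2 := Real.rpow_one 2
  have e1 : ((2:ℝ)/‖z‖) ^ ((1:ℝ)/p) = 2 ^ ((1:ℝ)/p) / ‖z‖ ^ ((1:ℝ)/p) :=
    Real.div_rpow (by norm_num) hzpos.le _
  have e3 : (1 + ‖z‖) ^ ((1:ℝ)/p) ≤ 2 * ‖z‖ ^ ((1:ℝ)/p) := by
    calc (1 + ‖z‖) ^ ((1:ℝ)/p) ≤ (2 * ‖z‖) ^ ((1:ℝ)/p) :=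
      Real.rpow_le_rpow (by linarith) (by linarith) (by positivity)
    _ = 2 ^ ((1:ℝ)/p) * ‖z‖ ^ ((1:ℝ)/p) := Real.mul_rpow (by norm_num) hzpos.le
    _ ≤ 2 * ‖z‖ ^ ((1:ℝ)/p) :=
      mul_le_mul_of_nonneg_right e2 (Real.rpow_nonneg hzpos.le _)
  have hzr_pos : (0:ℝ) < ‖z‖ ^ ((1:ℝ)/p) := Real.rpow_pos_of_pos hzpos _
  have h1z_pos : (0:ℝ) < (1 + ‖z‖) ^ ((1:ℝ)/p) := Real.rpow_pos_of_pos (by linarith) _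
  have e4 : ((2:ℝ)/‖z‖) ^ ((1:ℝ)/p) ≤ 4 / (1 + ‖z‖) ^ ((1:ℝ)/p) := by
    rw [e1, div_le_div_iff₀ hzr_pos h1z_pos]
    have h2r_nonneg : (0:ℝ) ≤ (2:ℝ) ^ ((1:ℝ)/p) := Real.rpow_nonneg (by norm_num) _
    nlinarith
  linarith [le_trans ht_rpow e4, hFle, le_trans hFle (le_trans ht_rpow e4)]

lemma aux_sector_subset {p : ℕ} (hp : 2 ≤ p) {ε : ℝ} (hε : 0 < ε) :
    sector ε ⊆ cutPlane p := by
  intro z hzs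
  simp only [cutPlane, Set.mem_compl_iff]
  intro hzmem
  obtain ⟨x, hx, rfl⟩ := hzmem
  have hx0 : 0 ≤ x := le_trans (Rp_pos hp).le hx
  have : Complex.arg x = 0 := Complex.arg_ofReal_of_nonneg hx0
  simp only [sector, Set.mem_setOf_eq, this, abs_zero] at hzs
  linarith

/-- Let `T` be analytic on `Ω_p` with `z T(z)^p − T(z) + 1 = 0` and
`1 − p z T(z)^{p−1} ≠ 0` there, and set `F(z) = 1/(1 − p z T(z)^{p−1})`.  Then for every
`ε ∈ (0, π)` there is `K > 0` with `|F(z)| ≤ K/(1 + |z|)^{1/p}` for all `z ∈ ℂ_ε`. -/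
theorem fussCatalan_F_decay (p : ℕ) (hp : 2 ≤ p) (T : ℂ → ℂ)
    (hT : AnalyticOnNhd ℂ T (cutPlane p))
    (heq : ∀ z ∈ cutPlane p, z * T z ^ p - T z + 1 = 0)
    (hne : ∀ z ∈ cutPlane p, 1 - (p : ℂ) * z * T z ^ (p - 1) ≠ 0)
    (ε : ℝ) (hε : ε ∈ Set.Ioo 0 Real.pi) :
    ∃ K : ℝ, 0 < K ∧ ∀ z ∈ sector ε,
      ‖(1 - (p : ℂ) * z * T z ^ (p - 1))⁻¹‖ ≤ K / (1 + ‖z‖) ^ ((1 : ℝ) / p) := by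
  obtain ⟨hε0, hεπ⟩ := hε
  have hsub : sector ε ⊆ cutPlane p := aux_sector_subset hp hε0
  set R : ℝ := (2:ℝ)^(p+1) with hRdef
  -- compact set
  set C : Set ℂ := Metric.closedBall (0:ℂ) R ∩ {z : ℂ | z.re ≤ Real.cos ε * ‖z‖} with hCdef
  have hCcomp : IsCompact C :=
    (isCompact_closedBall _ _).inter_right
      (isClosed_le Complex.continuous_re (continuous_const.mul continuous_norm))
  have hcosε : Real.cos ε < 1 := by
    have := Real.cos_lt_cos_of_nonneg_of_le_pi le_rfl hεπ.le hε0
    simpa using this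
  have hCsub : C ⊆ cutPlane p := by
    rintro z ⟨_, hre⟩
    simp only [cutPlane, Set.mem_compl_iff]
    intro hzmem
    obtain ⟨x, hx, rfl⟩ := hzmem
    have hx0 : 0 < x := lt_of_lt_of_le (Rp_pos hp) hx
    simp only [Set.mem_setOf_eq, Complex.ofReal_re] at hre
    have hnx : ‖(x:ℂ)‖ = x := by
      rw [Complex.norm_real, Real.norm_eq_abs, abs_of_pos hx0]
    rw [hnx] at hre
    nlinarith
  -- continuity of F on C
  have hF : AnalyticOnNhd ℂ (fun z => (1 - (p : ℂ) * z * T z ^ (p - 1))⁻¹) (cutPlane p) := by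
    apply AnalyticOnNhd.inv
    · exact analyticOnNhd_const.sub
        ((analyticOnNhd_const.mul analyticOnNhd_id).mul (hT.pow _))
    · exact hne
  have hcont : ContinuousOn (fun z => (1 - (p : ℂ) * z * T z ^ (p - 1))⁻¹) C :=
    (hF.continuousOn).mono hCsub
  obtain ⟨M, hM⟩ := hCcomp.exists_bound_of_continuousOn hcont
  -- combine
  set M' : ℝ := max M 0 with hM'def
  have h1R : (0:ℝ) < 1 + R := by positivity
  set K : ℝ := max 4 ((M' + 1) * (1 + R) ^ ((1:ℝ)/p)) with hKdef
  have hK4 : (4:ℝ) ≤ K := le_max_left _ _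
  have hKpos : 0 < K := by linarith
  refine ⟨K, hKpos, ?_⟩
  intro z hzs
  have hzc : z ∈ cutPlane p := hsub hzs
  have h1z_pos : (0:ℝ) < (1 + ‖z‖) ^ ((1:ℝ)/p) :=
    Real.rpow_pos_of_pos (by positivity) _
  by_cases hcase : R ≤ ‖z‖
  · have := aux_F_large hp (heq z hzc) (hne z hzc) hcase
    calc ‖(1 - (p : ℂ) * z * T z ^ (p - 1))⁻¹‖ ≤ 4 / (1 + ‖z‖) ^ ((1:ℝ)/p) := this
    _ ≤ K / (1 + ‖z‖) ^ ((1:ℝ)/p) := by gcongr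
  · push_neg at hcase
    -- z ∈ C
    have hz0 : z ≠ 0 := by
      intro h
      rw [h] at hzs
      simp only [sector, Set.mem_setOf_eq, Complex.arg_zero, abs_zero] at hzs
      linarith
    have hzC : z ∈ C := by
      constructor
      · rw [Metric.mem_closedBall, dist_zero_right]
        exact hcase.le
      · simp only [Set.mem_setOf_eq]
        have harg : Real.cos z.arg = z.re / ‖z‖ := Complex.cos_arg hz0
        have habs : (0:ℝ) < ‖z‖ := norm_pos_iff.mpr hz0
        have hre : z.re = Real.cos z.arg * ‖z‖ := by
          rw [harg]
          field_simp
        have hargle : Real.cos z.arg ≤ Real.cos ε := by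
          rw [← Real.cos_abs]
          apply Real.cos_le_cos_of_nonneg_of_le_pi hε0.le (Complex.abs_arg_le_pi z)
          exact (Set.mem_setOf_eq ▸ hzs).le
        rw [hre]
        exact mul_le_mul_of_nonneg_right hargle (norm_nonneg z)
    have hbound := hM z hzC
    have hMM' : ‖(1 - (p : ℂ) * z * T z ^ (p - 1))⁻¹‖ ≤ M' := le_trans hbound (le_max_left _ _)
    have hM'0 : 0 ≤ M' := le_max_right _ _
    have hmono : (1 + ‖z‖) ^ ((1:ℝ)/p) ≤ (1 + R) ^ ((1:ℝ)/p) := by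
      apply Real.rpow_le_rpow (by positivity) (by linarith) (by positivity)
    have hKge : (M' + 1) * (1 + R) ^ ((1:ℝ)/p) ≤ K := le_max_right _ _
    have hstep : M' * (1 + ‖z‖) ^ ((1:ℝ)/p) ≤ K := by
      calc M' * (1 + ‖z‖) ^ ((1:ℝ)/p) ≤ M' * (1 + R) ^ ((1:ℝ)/p) :=
        mul_le_mul_of_nonneg_left hmono hM'0
      _ ≤ (M' + 1) * (1 + R) ^ ((1:ℝ)/p) := by
          apply mul_le_mul_of_nonneg_right (by linarith) (by positivity)
      _ ≤ K := hKge
    calc ‖(1 - (p : ℂ) * z * T z ^ (p - 1))⁻¹‖ ≤ M' := hMM'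
    _ ≤ K / (1 + ‖z‖) ^ ((1:ℝ)/p) := by
        rw [le_div_iff₀ h1z_pos]
        exact hstep
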